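/- Let (X₁,C₁),…,(Xₙ,Cₙ) be i.i.d. pairs where Xᵢ is a square-integrable real random variable with variance σ², Cᵢ is a random variable taking values in a finite set {1,…,L} with P(Cᵢ = a) = p_a, and Xᵢ is independent of Cᵢ. Let X̄ = (1/n)∑ᵢ Xᵢ and p̂_a = (1/n)∑ᵢ 1{Cᵢ = a}. Then ∑_{a=1}^{L} E[ ( ∑_{i=1}^n 2(1{Cᵢ = a} - p̂_a)(X̄ - Xᵢ) )² ] = 4(n-1)·σ²·∑_{a=1}^{L} p_a(1 - p_a). -/

import Mathlib

open MeasureTheory ProbabilityTheory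

lemma aux_integral_finset_prod {Ω ι : Type*} [MeasurableSpace Ω] {μ : Measure Ω}
    [IsProbabilityMeasure μ] {F : ι → Ω → ℝ}
    (hind : iIndepFun F μ) (hmeas : ∀ i, Measurable (F i))
    (s : Finset ι) :
    ∫ ω, ∏ i ∈ s, F i ω ∂μ = ∏ i ∈ s, ∫ ω, F i ω ∂μ := by
  classical
  induction s using Finset.cons_induction with
  | empty => simp
  | cons i s hi ih =>
    have hprodmeas : Measurable fun ω => ∏ j ∈ s, F j ω :=
      Finset.measurable_prod _ (fun j _ => hmeas j)
    have hindep : IndepFun (F i) (fun ω => ∏ j ∈ s, F j ω) μ := by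
      have := (hind.indepFun_finset_prod_of_notMem hmeas hi).symm
      simpa [Finset.prod_fn] using this
    simp_rw [Finset.prod_cons]
    have hmul := hindep.integral_mul_eq_mul_integral (hmeas i).aestronglyMeasurable
      hprodmeas.aestronglyMeasurable
    simp only [Pi.mul_def] at hmul
    rw [hmul, ih]

lemma aux_atom {Ω : Type*} [MeasurableSpace Ω] {μ : Measure Ω} [IsProbabilityMeasure μ]
    {n : ℕ} (hn : 0 < n) {L : ℕ}
    {X : Fin n → Ω → ℝ} {C : Fin n → Ω → Fin L} {pa : Fin L → ℝ}
    (hmX : ∀ i, Measurable (X i)) (hmC : ∀ i, Measurable (C i))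
    (hpa : ∀ i a, (μ {ω | C i ω = a}).toReal = pa a)
    (hiid : iIndepFun (fun i ω => (X i ω, C i ω)) μ)
    (hident : ∀ i, IdentDistrib (fun ω => (X i ω, C i ω)) (fun ω => (X ⟨0, hn⟩ ω, C ⟨0, hn⟩ ω)) μ μ)
    (hXC : ∀ i, IndepFun (X i) (C i) μ)
    (a : Fin L) (i j k l : Fin n) :
    ∫ ω, (if C i ω = a then (1:ℝ) else 0) * (if C j ω = a then 1 else 0) * (X k ω * X l ω) ∂μ
      = (if i = j then pa a else pa a * pa a)
        * (if k = l then (∫ ω, X ⟨0,hn⟩ ω ^ 2 ∂μ) else (∫ ω, X ⟨0,hn⟩ ω ∂μ) * (∫ ω, X ⟨0,hn⟩ ω ∂μ)) := by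
  classical
  set M1 := ∫ ω, X ⟨0,hn⟩ ω ∂μ with hM1def
  set M2 := ∫ ω, X ⟨0,hn⟩ ω ^ 2 ∂μ with hM2def
  have hid1 : ∀ m : Fin n, IdentDistrib (X m) (X ⟨0,hn⟩) μ μ := by
    intro m
    have := (hident m).comp measurable_fst
    exact this
  have hM1 : ∀ m : Fin n, ∫ ω, X m ω ∂μ = M1 := fun m => (hid1 m).integral_eq
  have hM2 : ∀ m : Fin n, ∫ ω, X m ω * X m ω ∂μ = M2 := by
    intro m
    have : ∀ ω, X m ω * X m ω = X m ω ^ 2 := fun ω => (sq (X m ω)).symm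
    simp_rw [this]
    exact ((hid1 m).comp (measurable_id.pow_const 2)).integral_eq
  have hIval : ∀ m : Fin n, ∫ ω, (if C m ω = a then (1:ℝ) else 0) ∂μ = pa a := by
    intro m
    have hset : MeasurableSet {ω | C m ω = a} := (hmC m) (measurableSet_singleton a)
    have : (fun ω => if C m ω = a then (1:ℝ) else 0)
        = Set.indicator {ω | C m ω = a} (fun _ => (1:ℝ)) := by
      ext ω; simp [Set.indicator_apply]
    rw [this, integral_indicator_const _ hset]
    rw [smul_eq_mul, mul_one]; exact hpa m a
  -- the per-coordinate functions
  set h : Fin n → ℝ × Fin L → ℝ := fun m z =>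
    (if m = k then z.1 else 1) * (if m = l then z.1 else 1)
      * (if m = i ∨ m = j then (if z.2 = a then 1 else 0) else 1) with hh
  have hhmeas : ∀ m, Measurable (h m) := by
    intro m
    apply Measurable.mul
    · apply Measurable.mul
      · by_cases hm : m = k <;> simp [hh, hm] <;> exact measurable_fst
      · by_cases hm : m = l <;> simp [hh, hm] <;> exact measurable_fst
    · by_cases hm : m = i ∨ m = j <;> simp [hh, hm]
      exact Measurable.ite (measurable_snd (measurableSet_singleton a)) measurable_const
        measurable_const
  set F : Fin n → Ω → ℝ := fun m ω => h m (X m ω, C m ω) with hF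
  have hFind : iIndepFun F μ := by
    have := hiid.comp h hhmeas
    exact this
  have hFmeas : ∀ m, Measurable (F m) := fun m => (hhmeas m).comp ((hmX m).prodMk (hmC m))
  set s : Finset (Fin n) := {i, j, k, l} with hs
  have hks : k ∈ s := by simp [hs]
  have hls : l ∈ s := by simp [hs]
  -- generic product over the "i or j" indicator slots
  have hijprod : ∀ g : Fin n → ℝ,
      (∏ m ∈ s, (if m = i ∨ m = j then g m else 1)) = if i = j then g i else g i * g j := by
    intro g
    rw [← Finset.prod_filter]
    have hfil : s.filter (fun m => m = i ∨ m = j) = {i, j} := by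
      ext m
      simp only [Finset.mem_filter, Finset.mem_insert, Finset.mem_singleton, hs]
      tauto
    rw [hfil]
    by_cases hij : i = j
    · subst hij; simp
    · rw [Finset.prod_pair hij]; rw [if_neg hij]
  -- pointwise identity
  have hpoint : (fun ω => (if C i ω = a then (1:ℝ) else 0) * (if C j ω = a then 1 else 0)
      * (X k ω * X l ω)) = fun ω => ∏ m ∈ s, F m ω := by
    funext ω
    simp only [hF, hh]
    rw [Finset.prod_mul_distrib, Finset.prod_mul_distrib]
    rw [Finset.prod_ite_eq' s k (fun m => X m ω), Finset.prod_ite_eq' s l (fun m => X m ω),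
      if_pos hks, if_pos hls]
    rw [hijprod (fun m => if C m ω = a then (1:ℝ) else 0)]
    by_cases hij : i = j
    · subst hij
      rw [if_pos rfl]
      by_cases hc : C i ω = a <;> simp [hc] <;> ring
    · rw [if_neg hij]; ring
  rw [hpoint, aux_integral_finset_prod hFind hFmeas]
  -- value of each factor integral
  set c1 : ℝ := if k = l then M2 else M1 with hc1
  set c2 : ℝ := if k = l then 1 else M1 with hc2
  have hfac : ∀ m, ∫ ω, F m ω ∂μ
      = (if m = k then c1 else 1) * (if m = l then c2 else 1)
        * (if m = i ∨ m = j then pa a else 1) := by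
    intro m
    have hu : Measurable (fun x : ℝ => (if m = k then x else 1) * (if m = l then x else 1)) :=
      Measurable.mul (by split_ifs <;> [exact measurable_id; exact measurable_const])
        (by split_ifs <;> [exact measurable_id; exact measurable_const])
    have hv : Measurable
        (fun c : Fin L => if m = i ∨ m = j then (if c = a then (1:ℝ) else 0) else 1) := by
      by_cases hmij : m = i ∨ m = j <;> simp [hmij]
      exact Measurable.ite (measurableSet_singleton a) measurable_const measurable_const
    have hsplit : ∫ ω, F m ω ∂μ
        = (∫ ω, (if m = k then X m ω else 1) * (if m = l then X m ω else 1) ∂μ)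
          * ∫ ω, (if m = i ∨ m = j then (if C m ω = a then (1:ℝ) else 0) else 1) ∂μ := by
      have := ((hXC m).comp hu hv).integral_mul_eq_mul_integral ((hu.comp (hmX m)).aestronglyMeasurable)
        ((hv.comp (hmC m)).aestronglyMeasurable)
      simpa [hF, hh, Function.comp] using this
    rw [hsplit]
    have h2 : ∫ ω, (if m = i ∨ m = j then (if C m ω = a then (1:ℝ) else 0) else 1) ∂μ
        = if m = i ∨ m = j then pa a else 1 := by
      by_cases hmij : m = i ∨ m = j <;> simp [hmij, hIval m]
    have h1 : ∫ ω, (if m = k then X m ω else 1) * (if m = l then X m ω else 1) ∂μ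
        = (if m = k then c1 else 1) * (if m = l then c2 else 1) := by
      by_cases hmk : m = k <;> by_cases hml : m = l
      · have hkl : k = l := by rw [← hmk, ← hml]
        simp only [if_pos hmk, if_pos hml, hc1, hc2, if_pos hkl, mul_one]
        exact hM2 m
      · have hkl : ¬ k = l := fun h => hml (hmk.trans h)
        simp only [if_pos hmk, if_neg hml, mul_one, hc1, hc2, if_neg hkl]
        exact hM1 m
      · have hkl : ¬ k = l := fun h => hmk (hml.trans h.symm)
        simp only [if_neg hmk, if_pos hml, one_mul, hc1, hc2, if_neg hkl]
        exact hM1 m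
      · simp [hmk, hml]
    rw [h1, h2]
  rw [Finset.prod_congr rfl (fun m _ => hfac m), Finset.prod_mul_distrib,
    Finset.prod_mul_distrib, Finset.prod_ite_eq' s k (fun _ => c1),
    Finset.prod_ite_eq' s l (fun _ => c2), if_pos hks, if_pos hls,
    hijprod (fun _ => pa a)]
  by_cases hkl : k = l <;> by_cases hij : i = j <;>
    simp only [hc1, hc2, hkl, hij, if_true, if_false, ite_true, ite_false] <;> ring
lemma aux_pointwise {n : ℕ} (hn : 0 < n) {L : ℕ} (a : Fin L) (x : Fin n → ℝ)
    (cc : Fin n → Fin L) :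
    (∑ i, 2 * ((if cc i = a then (1 : ℝ) else 0)
          - (∑ j, if cc j = a then (1 : ℝ) else 0) / n)
        * ((∑ j, x j) / n - x i)) ^ 2
      = ∑ i, ∑ j, ∑ k, ∑ l,
          (4 * ((1/(n:ℝ) - if i = k then 1 else 0) * (1/(n:ℝ) - if j = l then 1 else 0)))
            * ((if cc i = a then (1:ℝ) else 0) * (if cc j = a then 1 else 0) * (x k * x l)) := by
  have hnne : (n : ℝ) ≠ 0 := Nat.cast_ne_zero.mpr hn.ne'
  set I : Fin n → ℝ := fun m => if cc m = a then 1 else 0 with hI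
  set Y : Fin n → ℝ := fun i => (∑ j, x j) / n - x i with hY
  have hYsum : ∑ i, Y i = 0 := by
    rw [hY, Finset.sum_sub_distrib, Finset.sum_const, Finset.card_univ, Fintype.card_fin,
      nsmul_eq_mul, mul_div_cancel₀ _ hnne, sub_self]
  have step1 : ∑ i, 2 * (I i - (∑ j, I j) / n) * Y i = 2 * ∑ i, I i * Y i := by
    have : ∀ i : Fin n, 2 * (I i - (∑ j, I j) / n) * Y i
        = 2 * (I i * Y i) - (2 * ((∑ j, I j) / n)) * Y i := by intro i; ring
    rw [Finset.sum_congr rfl fun i _ => this i, Finset.sum_sub_distrib, ← Finset.mul_sum,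
      ← Finset.mul_sum, hYsum, mul_zero, sub_zero]
  have step2 : ∀ i, Y i = ∑ k, (1/(n:ℝ) - if i = k then 1 else 0) * x k := by
    intro i
    have : ∀ k : Fin n, (1/(n:ℝ) - if i = k then 1 else 0) * x k
        = x k / (n:ℝ) - (if i = k then x k else 0) := by
      intro k; split_ifs <;> ring
    rw [Finset.sum_congr rfl fun k _ => this k, Finset.sum_sub_distrib, ← Finset.sum_div,
      Finset.sum_ite_eq, if_pos (Finset.mem_univ i), hY]
  have sqexp : (2 * ∑ i, I i * Y i) ^ 2 = 4 * ∑ i, ∑ j, (I i * Y i) * (I j * Y j) := by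
    rw [← Finset.sum_mul_sum]; ring
  rw [step1, sqexp, Finset.mul_sum]
  refine Finset.sum_congr rfl fun i _ => ?_
  rw [Finset.mul_sum]
  refine Finset.sum_congr rfl fun j _ => ?_
  have haux : ∀ u v : ℝ, 4 * (I i * u * (I j * v)) = (4 * (I i * I j)) * (u * v) := by
    intros; ring
  rw [step2 i, step2 j, haux, Finset.sum_mul_sum, Finset.mul_sum]
  refine Finset.sum_congr rfl fun k _ => ?_
  rw [Finset.mul_sum]
  refine Finset.sum_congr rfl fun l _ => ?_
  ring

lemma aux_arith {n : ℕ} (hn : 0 < n) (p M1 M2 : ℝ) :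
    ∑ i : Fin n, ∑ j : Fin n, ∑ k : Fin n, ∑ l : Fin n,
      (4 * ((1/(n:ℝ) - if i = k then 1 else 0) * (1/(n:ℝ) - if j = l then 1 else 0)))
        * ((if i = j then p else p * p) * (if k = l then M2 else M1 * M1))
    = 4 * ((n:ℝ) - 1) * (M2 - M1 ^ 2) * (p * (1 - p)) := by
  have hnne : (n : ℝ) ≠ 0 := Nat.cast_ne_zero.mpr hn.ne'
  set c : Fin n → Fin n → ℝ := fun i k => 1/(n:ℝ) - if i = k then 1 else 0 with hc
  set D : ℝ := M2 - M1 * M1 with hD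
  have hcsum : ∀ i : Fin n, ∑ k, c i k = 0 := by
    intro i
    rw [hc]
    rw [Finset.sum_sub_distrib, Finset.sum_ite_eq, if_pos (Finset.mem_univ i),
      Finset.sum_const, Finset.card_univ, Fintype.card_fin, nsmul_eq_mul,
      mul_one_div, div_self hnne, sub_self]
  have hdelta : ∀ i j : Fin n, ∑ k, (if i = k then (1:ℝ) else 0) * (if j = k then 1 else 0)
      = if i = j then 1 else 0 := by
    intro i j
    have : ∀ k : Fin n, (if i = k then (1:ℝ) else 0) * (if j = k then 1 else 0)
        = if i = k then (if j = k then (1:ℝ) else 0) else 0 := by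
      intro k; split_ifs <;> ring
    rw [Finset.sum_congr rfl fun k _ => this k, Finset.sum_ite_eq, if_pos (Finset.mem_univ i)]
    by_cases h : i = j
    · subst h; simp
    · rw [if_neg (fun hji => h hji.symm), if_neg h]
  have hcc : ∀ i j : Fin n, ∑ k, c i k * c j k = (if i = j then 1 else 0) - 1/(n:ℝ) := by
    intro i j
    have expand : ∀ k : Fin n, c i k * c j k
        = 1/(n:ℝ) * (1/(n:ℝ)) - (if i = k then 1 else 0) * (1/(n:ℝ))
          - (if j = k then 1 else 0) * (1/(n:ℝ))
          + (if i = k then (1:ℝ) else 0) * (if j = k then 1 else 0) := by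
      intro k; rw [hc]; ring
    rw [Finset.sum_congr rfl fun k _ => expand k]
    rw [Finset.sum_add_distrib, Finset.sum_sub_distrib, Finset.sum_sub_distrib,
      Finset.sum_const, Finset.card_univ, Fintype.card_fin, nsmul_eq_mul, hdelta i j,
      ← Finset.sum_mul, ← Finset.sum_mul, Finset.sum_ite_eq, Finset.sum_ite_eq,
      if_pos (Finset.mem_univ i), if_pos (Finset.mem_univ j)]
    field_simp
    ring
  -- inner double sum
  have hW : ∀ i j : Fin n, ∑ k, ∑ l, (4 * (c i k * c j l))
      * ((if i = j then p else p * p) * (if k = l then M2 else M1 * M1))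
      = (if i = j then 4 * p else 4 * (p * p)) * (D * ((if i = j then 1 else 0) - 1/(n:ℝ))) := by
    intro i j
    have hsplit : ∀ k l : Fin n, (if k = l then M2 else M1 * M1)
        = M1 * M1 + (if k = l then D else 0) := by
      intro k l; rw [hD]; split_ifs <;> ring
    have key : ∀ k l : Fin n, (4 * (c i k * c j l))
        * ((if i = j then p else p * p) * (if k = l then M2 else M1 * M1))
        = (if i = j then 4 * p else 4 * (p * p))
            * ((c i k * c j l) * (M1 * M1) + (c i k * c j l) * (if k = l then D else 0)) := by
      intro k l; rw [hsplit k l]; split_ifs <;> ring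
    rw [Finset.sum_congr rfl fun k _ => Finset.sum_congr rfl fun l _ => key k l]
    simp only [← Finset.mul_sum]
    congr 1
    have inner : ∀ k : Fin n, ∑ l, ((c i k * c j l) * (M1 * M1)
          + (c i k * c j l) * (if k = l then D else 0)) = c i k * c j k * D := by
      intro k
      rw [Finset.sum_add_distrib]
      have h1 : ∑ l, (c i k * c j l) * (M1 * M1) = 0 := by
        have : ∀ l : Fin n, (c i k * c j l) * (M1 * M1) = (c i k * (M1 * M1)) * c j l := by
          intro l; ring
        rw [Finset.sum_congr rfl fun l _ => this l, ← Finset.mul_sum, hcsum j, mul_zero]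
      have h2 : ∑ l, (c i k * c j l) * (if k = l then D else 0) = c i k * c j k * D := by
        have : ∀ l : Fin n, (c i k * c j l) * (if k = l then D else 0)
            = if k = l then c i k * c j l * D else 0 := by
          intro l; split_ifs <;> ring
        rw [Finset.sum_congr rfl fun l _ => this l, Finset.sum_ite_eq,
          if_pos (Finset.mem_univ k)]
      rw [h1, h2, zero_add]
    rw [Finset.sum_congr rfl fun k _ => inner k, ← Finset.sum_mul, hcc i j]
    ring
  -- outer double sum
  set A' : ℝ := 4 * p * (D * (1 - 1/(n:ℝ))) with hA'
  set B' : ℝ := 4 * (p * p) * (D * (0 - 1/(n:ℝ))) with hB'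
  have hWif : ∀ i j : Fin n,
      (if i = j then 4 * p else 4 * (p * p)) * (D * ((if i = j then 1 else 0) - 1/(n:ℝ)))
      = if i = j then A' else B' := by
    intro i j
    by_cases h : i = j <;> simp [h, hA', hB']
  calc ∑ i : Fin n, ∑ j : Fin n, ∑ k : Fin n, ∑ l : Fin n,
      (4 * ((1/(n:ℝ) - if i = k then 1 else 0) * (1/(n:ℝ) - if j = l then 1 else 0)))
        * ((if i = j then p else p * p) * (if k = l then M2 else M1 * M1))
      = ∑ i : Fin n, ∑ j : Fin n, (if i = j then A' else B') :=
        Finset.sum_congr rfl fun i _ => Finset.sum_congr rfl fun j _ =>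
          (hW i j).trans (hWif i j)
    _ = ∑ _i : Fin n, ((A' - B') + (n:ℝ) * B') := by
        refine Finset.sum_congr rfl fun i _ => ?_
        rw [Finset.sum_congr rfl fun j _ =>
          (show (if i = j then A' else B') = (if i = j then A' - B' else 0) + B' by
            split_ifs <;> ring), Finset.sum_add_distrib, Finset.sum_ite_eq,
          if_pos (Finset.mem_univ i), Finset.sum_const, Finset.card_univ, Fintype.card_fin,
          nsmul_eq_mul]
    _ = (n:ℝ) * ((A' - B') + (n:ℝ) * B') := by
        rw [Finset.sum_const, Finset.card_univ, Fintype.card_fin, nsmul_eq_mul]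
    _ = 4 * ((n:ℝ) - 1) * (M2 - M1 ^ 2) * (p * (1 - p)) := by
        rw [hA', hB', hD]; field_simp; ring

/-- Calibration weight identity for a continuous–discrete edge: for i.i.d. pairs (Xᵢ, Cᵢ) with
Xᵢ ⊥ Cᵢ, ∑ₐ E[(∑ᵢ 2(1{Cᵢ=a} - p̂ₐ)(X̄ - Xᵢ))²] = 4(n-1)·σ²·∑ₐ pₐ(1-pₐ). -/
theorem calibration_weight_cts_discrete {Ω : Type*} [MeasurableSpace Ω] (μ : Measure Ω)
    [IsProbabilityMeasure μ] (n : ℕ) (hn : 0 < n) (L : ℕ)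
    (X : Fin n → Ω → ℝ) (C : Fin n → Ω → Fin L) (pa : Fin L → ℝ)
    (hmX : ∀ i, Measurable (X i)) (hmC : ∀ i, Measurable (C i))
    (hX2 : ∀ i, MemLp (X i) 2 μ)
    (hpa : ∀ i a, (μ {ω | C i ω = a}).toReal = pa a)
    (hiid : iIndepFun (fun i ω => (X i ω, C i ω)) μ)
    (hident : ∀ i, IdentDistrib (fun ω => (X i ω, C i ω)) (fun ω => (X ⟨0, hn⟩ ω, C ⟨0, hn⟩ ω)) μ μ)
    (hXC : ∀ i, IndepFun (X i) (C i) μ) :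
    ∑ a : Fin L, ∫ ω,
        (∑ i, 2 * ((if C i ω = a then (1 : ℝ) else 0)
              - (∑ j, if C j ω = a then (1 : ℝ) else 0) / n)
            * ((∑ j, X j ω) / n - X i ω)) ^ 2 ∂μ
      = 4 * (n - 1 : ℝ) * variance (X ⟨0, hn⟩) μ * ∑ a : Fin L, pa a * (1 - pa a) := by
  classical
  have hImeas : ∀ (a : Fin L) (m : Fin n),
      Measurable (fun ω => if C m ω = a then (1:ℝ) else 0) := fun a m =>
    Measurable.ite ((hmC m) (measurableSet_singleton a)) measurable_const measurable_const
  have hXX : ∀ k l : Fin n, Integrable (fun ω => X k ω * X l ω) μ := by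
    intro k l
    have h12 : (1 : ENNReal)/1 = 1/2 + 1/2 := by
      rw [ENNReal.div_add_div_same, div_one, one_add_one_eq_two]
      exact ((ENNReal.div_self (by norm_num) (by norm_num) : (2 : ENNReal)/2 = 1)).symm
    have h1 : MemLp ((X k) • (X l)) 1 μ := (hX2 l).smul (hX2 k)
    have h2 := h1.integrable le_rfl
    exact h2
  have hterm : ∀ (a : Fin L) (i j k l : Fin n),
      Integrable (fun ω => (if C i ω = a then (1:ℝ) else 0) * (if C j ω = a then 1 else 0)
        * (X k ω * X l ω)) μ := by
    intro a i j k l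
    refine (hXX k l).bdd_mul ((hImeas a i).mul (hImeas a j)).aestronglyMeasurable
      (c := 1) (Filter.Eventually.of_forall fun ω => ?_)
    by_cases h1 : C i ω = a <;> by_cases h2 : C j ω = a <;> simp [h1, h2]
  have key : ∀ a : Fin L, ∫ ω, (∑ i, 2 * ((if C i ω = a then (1 : ℝ) else 0)
        - (∑ j, if C j ω = a then (1 : ℝ) else 0) / n) * ((∑ j, X j ω) / n - X i ω)) ^ 2 ∂μ
      = 4 * ((n:ℝ) - 1) * ((∫ ω, X ⟨0,hn⟩ ω ^ 2 ∂μ) - (∫ ω, X ⟨0,hn⟩ ω ∂μ) ^ 2)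
          * (pa a * (1 - pa a)) := by
    intro a
    have hpt : ∀ ω, (∑ i, 2 * ((if C i ω = a then (1 : ℝ) else 0)
          - (∑ j, if C j ω = a then (1 : ℝ) else 0) / n) * ((∑ j, X j ω) / n - X i ω)) ^ 2
        = ∑ i, ∑ j, ∑ k, ∑ l,
            (4 * ((1/(n:ℝ) - if i = k then 1 else 0) * (1/(n:ℝ) - if j = l then 1 else 0)))
              * ((if C i ω = a then (1:ℝ) else 0) * (if C j ω = a then 1 else 0)
                * (X k ω * X l ω)) :=
      fun ω => aux_pointwise hn a (fun m => X m ω) (fun m => C m ω)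
    rw [integral_congr_ae (Filter.Eventually.of_forall hpt)]
    rw [integral_finset_sum _ (fun i _ => integrable_finset_sum _ (fun j _ =>
      integrable_finset_sum _ (fun k _ => integrable_finset_sum _ (fun l _ =>
        ((hterm a i j k l).const_mul _)))))]
    rw [Finset.sum_congr rfl fun i _ => integral_finset_sum _ (fun j _ =>
      integrable_finset_sum _ (fun k _ => integrable_finset_sum _ (fun l _ =>
        ((hterm a i j k l).const_mul _))))]
    rw [Finset.sum_congr rfl fun i _ => Finset.sum_congr rfl fun j _ =>
      integral_finset_sum _ (fun k _ => integrable_finset_sum _ (fun l _ =>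
        ((hterm a i j k l).const_mul _)))]
    rw [Finset.sum_congr rfl fun i _ => Finset.sum_congr rfl fun j _ =>
      Finset.sum_congr rfl fun k _ => integral_finset_sum _ (fun l _ =>
        ((hterm a i j k l).const_mul _))]
    rw [Finset.sum_congr rfl fun i _ => Finset.sum_congr rfl fun j _ =>
      Finset.sum_congr rfl fun k _ => Finset.sum_congr rfl fun l _ =>
        ((integral_const_mul _ _).trans
          (congrArg (HMul.hMul (4 * ((1/(n:ℝ) - if i = k then 1 else 0)
              * (1/(n:ℝ) - if j = l then 1 else 0))))
            (aux_atom hn hmX hmC hpa hiid hident hXC a i j k l)))]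
    exact aux_arith hn (pa a) _ _
  rw [Finset.sum_congr rfl fun a _ => key a, ← Finset.mul_sum,
    variance_eq_sub (hX2 ⟨0,hn⟩)]
  simp only [Pi.pow_apply]
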